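/- Let x ∈ ℕ^E be obtained from the zero vector by q steps: there are elements e_1,…,e_q ∈ E and positive integers l_1,…,l_q with x_0 = 0, x_i = x_{i-1} + l_i·χ_{e_i}, and x_q = x. Suppose t > 0 and for each i one has g(x_{i-1} + l_i·χ_{e_i}) − g(x_{i-1}) − t·c(l_i·χ_{e_i}) ≥ l_i·τ, where g is normalized. Then c(x) ≤ (1/t)·g(x) − (τ/t)·x(E). (Inequality (3.1.4): upper bound on the cost of the accepted solution.) -/
import Mathlib


/-- Inequality (3.1.4): upper bound on the cost of the accepted solution. -/
theorem stmt_3 {E : Type*} [Fintype E] [DecidableEq E]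
    (g c : (E → ℕ) → ℝ)
    (hg0 : g 0 = 0) (hgnn : ∀ x : E → ℕ, 0 ≤ g x)
    (w : E → ℝ) (hw : ∀ e, 0 ≤ w e)
    (hc : ∀ x : E → ℕ, c x = ∑ e, w e * (x e : ℝ))
    (τ t : ℝ) (ht : 0 < t)
    (q : ℕ) (e : ℕ → E) (l : ℕ → ℕ) (hl : ∀ i < q, 0 < l i)
    (xs : ℕ → E → ℕ) (hx0 : xs 0 = 0)
    (hstep : ∀ i < q, xs (i + 1) = xs i + (l i) • Pi.single (e i) 1)
    (x : E → ℕ) (hxq : xs q = x)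
    (hineq : ∀ i < q,
      g (xs i + (l i) • Pi.single (e i) 1) - g (xs i)
        - t * c ((l i) • Pi.single (e i) 1) ≥ (l i : ℝ) * τ) :
    c x ≤ (1 / t) * g x - (τ / t) * (∑ e', (x e' : ℝ)) := by
  have key : ∀ n ≤ q, t * c (xs n) + τ * (∑ e', (xs n e' : ℝ)) ≤ g (xs n) := by
    intro n hn
    induction n with
    | zero =>
      simp [hx0, hc, hg0]
    | succ n ih =>
      have hn' : n < q := hn
      have ih' := ih (le_of_lt hn')
      have hs := hstep n hn'
      have hcadd : c (xs (n+1)) = c (xs n) + c ((l n) • Pi.single (e n) 1) := by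
        simp only [hs, hc]
        rw [← Finset.sum_add_distrib]
        apply Finset.sum_congr rfl
        intro a _
        simp [Pi.add_apply, Nat.cast_add]
        ring
      have hsumadd : (∑ e', ((xs (n+1)) e' : ℝ)) = (∑ e', ((xs n) e' : ℝ)) + l n := by
        simp only [hs, Pi.add_apply, Nat.cast_add]
        rw [Finset.sum_add_distrib]
        congr 1
        have : ∀ a : E, (((l n • Pi.single (e n) 1 : E → ℕ)) a : ℝ)
            = if a = e n then (l n : ℝ) else 0 := by
          intro a
          by_cases h : a = e n <;> simp [h, Pi.single_apply]
        rw [Finset.sum_congr rfl (fun a _ => this a)]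
        simp
      have hi := hineq n hn'
      rw [hcadd, hsumadd]
      rw [← hs] at hi
      nlinarith [hi, ih']
  have hq := key q le_rfl
  rw [hxq] at hq
  have h2 : 1 / t * g x - τ / t * (∑ e', (x e' : ℝ)) = (g x - τ * ∑ e', (x e' : ℝ)) / t := by
    field_simp
  rw [h2, le_div_iff₀ ht]
  linarith
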